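/- Let R be a local ring (the non-units of R form an additive subgroup, equivalently R has a unique maximal right ideal) that satisfies the generating hypothesis. Then R is von Neumann regular. -/

import Mathlib

open CategoryTheory CategoryTheory.Limits HomologicalComplex TensorProduct

universe u

/-- A chain complex of right `R`-modules (i.e. left `Rᵐᵒᵖ`-modules) is perfect if it is
bounded and each term is a finitely generated projective module. -/
def IsPerfect (R : Type u) [Ring R] (P : ChainComplex (ModuleCat.{u} Rᵐᵒᵖ) ℤ) : Prop :=
  (∃ a b : ℤ, ∀ n : ℤ, (n < a ∨ b < n) → IsZero (P.X n)) ∧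
    ∀ n : ℤ, Module.Finite Rᵐᵒᵖ (P.X n) ∧ Module.Projective Rᵐᵒᵖ (P.X n)

/-- `R` satisfies the generating hypothesis: every chain map between perfect complexes of
right `R`-modules which induces the zero map on all homology modules is chain homotopic
to zero. -/
def SatisfiesGH (R : Type u) [Ring R] : Prop :=
  ∀ P Q : ChainComplex (ModuleCat.{u} Rᵐᵒᵖ) ℤ, IsPerfect R P → IsPerfect R Q →
    ∀ f : P ⟶ Q, (∀ n : ℤ, homologyMap f n = 0) → Nonempty (Homotopy f 0)

namespace VNRGH

open MulOpposite

variable {R : Type u} [Ring R]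

/-! ### Local ring helper lemmas (noncommutative) -/

section LocalRing

variable [IsLocalRing R]

lemma eq_one_of_isUnit_idem {e : R} (he : IsUnit e) (h : e * e = e) : e = 1 := by
  obtain ⟨w, hw⟩ := he
  calc e = 1 * e := (one_mul e).symm
    _ = ((↑w⁻¹ : R) * ↑w) * e := by rw [w.inv_mul]
    _ = (↑w⁻¹ : R) * (e * e) := by rw [mul_assoc, hw]
    _ = (↑w⁻¹ : R) * e := by rw [h]
    _ = (↑w⁻¹ : R) * ↑w := by rw [hw]
    _ = 1 := w.inv_mul

lemma isUnit_left_of_mul {a b : R} (h : IsUnit (a * b)) : IsUnit a := by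
  obtain ⟨w, hw⟩ := h
  have hac : a * (b * (↑w⁻¹ : R)) = 1 := by
    rw [← mul_assoc, ← hw]; exact w.mul_inv
  set c := b * (↑w⁻¹ : R) with hc
  have hadd : c * a + (1 - c * a) = 1 := by abel
  rcases IsLocalRing.isUnit_or_isUnit_of_add_one hadd with h1 | h2
  · have he1 : c * a = 1 := eq_one_of_isUnit_idem h1 (by
      calc (c * a) * (c * a) = c * ((a * c) * a) := by
            rw [mul_assoc, ← mul_assoc a c a]
        _ = c * a := by rw [hac, one_mul])
    exact ⟨⟨a, c, hac, he1⟩, rfl⟩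
  · obtain ⟨v, hv⟩ := h2
    have haca : a * (c * a) = a := by rw [← mul_assoc, hac, one_mul]
    have ha0 : a * (1 - c * a) = 0 := by rw [mul_sub, mul_one, haca, sub_self]
    have ha : a = 0 := by
      have h' : a * ((1 - c * a) * (↑v⁻¹ : R)) = 0 := by
        rw [← mul_assoc, ha0, zero_mul]
      rwa [← hv, v.mul_inv, mul_one] at h'
    exfalso
    rw [ha, zero_mul] at hac
    exact zero_ne_one hac

lemma isUnit_right_of_mul {a b : R} (h : IsUnit (a * b)) : IsUnit b := by
  obtain ⟨w, hw⟩ := h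
  have hcb : ((↑w⁻¹ : R) * a) * b = 1 := by
    rw [mul_assoc, ← hw]; exact w.inv_mul
  set c := (↑w⁻¹ : R) * a with hc
  have hadd : b * c + (1 - b * c) = 1 := by abel
  rcases IsLocalRing.isUnit_or_isUnit_of_add_one hadd with h1 | h2
  · have he1 : b * c = 1 := eq_one_of_isUnit_idem h1 (by
      calc (b * c) * (b * c) = b * ((c * b) * c) := by
            rw [mul_assoc, ← mul_assoc c b c]
        _ = b * c := by rw [hcb, one_mul])
    exact ⟨⟨b, c, he1, hcb⟩, rfl⟩
  · obtain ⟨v, hv⟩ := h2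
    have hbcb : (b * c) * b = b := by rw [mul_assoc, hcb, mul_one]
    have hb0 : (1 - b * c) * b = 0 := by rw [sub_mul, one_mul, hbcb, sub_self]
    have hb : b = 0 := by
      have h' : ((↑v⁻¹ : R) * (1 - b * c)) * b = 0 := by
        rw [mul_assoc, hb0, mul_zero]
      rwa [← hv, v.inv_mul, one_mul] at h'
    exfalso
    rw [hb, mul_zero] at hcb
    exact zero_ne_one hcb

end LocalRing

/-! ### Two-term complexes -/

variable (R)

abbrev Mo : ModuleCat.{u} Rᵐᵒᵖ := ModuleCat.of Rᵐᵒᵖ Rᵐᵒᵖ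
abbrev Zo : ModuleCat.{u} Rᵐᵒᵖ := ModuleCat.of Rᵐᵒᵖ PUnit.{u+1}

variable {R}

/-- Left multiplication by `x` as a linear map of right `R`-modules. -/
def mrL (x : R) : Rᵐᵒᵖ →ₗ[Rᵐᵒᵖ] Rᵐᵒᵖ where
  toFun := fun a => a * op x
  map_add' := fun a b => add_mul a b (op x)
  map_smul' := fun r a => mul_assoc r a (op x)

@[simp] lemma mrL_apply (x : R) (a : Rᵐᵒᵖ) : mrL x a = a * op x := rfl

/-- Left multiplication by `x` as a morphism in `ModuleCat`. -/
def mr (x : R) : Mo R ⟶ Mo R := ModuleCat.ofHom (mrL x)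

lemma mrL_comp (x y : R) : (mrL x).comp (mrL y) = mrL (x * y) := by
  apply LinearMap.ext
  intro a
  show (a * op y) * op x = a * op (x * y)
  rw [op_mul, mul_assoc]

lemma mr_comp (x y : R) : mr y ≫ mr x = mr (x * y) := ModuleCat.hom_ext (mrL_comp x y)

lemma mrL_zero : mrL (0 : R) = 0 := by
  apply LinearMap.ext
  intro a
  rw [mrL_apply, MulOpposite.op_zero, mul_zero, LinearMap.zero_apply]

lemma mr_zero : mr (0 : R) = 0 := ModuleCat.hom_ext mrL_zero

@[simp] lemma mcomp_apply {A B C : ModuleCat.{u} Rᵐᵒᵖ} (f : A ⟶ B) (g : B ⟶ C) (a : A) :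
    (f ≫ g) a = g (f a) := rfl

@[simp] lemma madd_apply {A B : ModuleCat.{u} Rᵐᵒᵖ} (f g : A ⟶ B) (a : A) :
    (f + g) a = f a + g a := rfl

def XA : ℤ → ModuleCat.{u} Rᵐᵒᵖ := fun n =>
  match n with
  | .ofNat 0 => Mo R
  | .ofNat 1 => Mo R
  | _ => Zo R

def XB : ℤ → ModuleCat.{u} Rᵐᵒᵖ := fun n =>
  match n with
  | .ofNat 1 => Mo R
  | .ofNat 2 => Mo R
  | _ => Zo R

def dA (x : R) : ∀ n : ℤ, XA (R := R) (n + 1) ⟶ XA (R := R) n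
  | .ofNat 0 => mr x
  | .ofNat (_+1) => 0
  | .negSucc _ => 0

def dB (x : R) : ∀ n : ℤ, XB (R := R) (n + 1) ⟶ XB (R := R) n
  | .ofNat 1 => mr x
  | .ofNat 0 => 0
  | .ofNat (_+2) => 0
  | .negSucc _ => 0

lemma dA_ne (x : R) {n : ℤ} (h : n ≠ 0) : dA x n = 0 := by
  match n, h with
  | .ofNat (k+1), _ => rfl
  | .negSucc k, _ => rfl

lemma dB_ne (x : R) {n : ℤ} (h : n ≠ 1) : dB x n = 0 := by
  match n, h with
  | .ofNat 0, _ => rfl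
  | .ofNat (k+2), _ => rfl
  | .negSucc k, _ => rfl

lemma sqA (x : R) : ∀ n : ℤ, dA x (n + 1) ≫ dA x n = 0 := by
  intro n
  rcases eq_or_ne n 0 with rfl | h
  · rw [show dA x (0 + 1) = 0 from rfl, zero_comp]
  · rw [dA_ne x h, comp_zero]

lemma sqB (x : R) : ∀ n : ℤ, dB x (n + 1) ≫ dB x n = 0 := by
  intro n
  rcases eq_or_ne n 1 with rfl | h
  · rw [show dB x (1 + 1) = 0 from rfl, zero_comp]
  · rw [dB_ne x h, comp_zero]

/-- The complex `R --x--> R` in degrees 1, 0. -/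
def KK (x : R) : ChainComplex (ModuleCat.{u} Rᵐᵒᵖ) ℤ := ChainComplex.of XA (dA x) (sqA x)

/-- The complex `R --x--> R` in degrees 2, 1. -/
def LL (x : R) : ChainComplex (ModuleCat.{u} Rᵐᵒᵖ) ℤ := ChainComplex.of XB (dB x) (sqB x)

lemma KK_d (x : R) : (KK x).d 1 0 = mr x := ChainComplex.of_d XA (dA x) 0

lemma LL_d (x : R) : (LL x).d 2 1 = mr x := ChainComplex.of_d XB (dB x) 1

lemma KK_d_ne (x : R) {i j : ℤ} (h : ¬(j = 0 ∧ i = 1)) : (KK x).d i j = 0 := by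
  by_cases hij : i = j + 1
  · subst hij
    have hj : j ≠ 0 := fun hj => h (by constructor <;> omega)
    exact (ChainComplex.of_d XA (dA x) j).trans (dA_ne x hj)
  · exact ChainComplex.of_d_ne XA (dA x) hij

/-! ### Perfectness -/

lemma subsingleton_XA {n : ℤ} (h0 : n ≠ 0) (h1 : n ≠ 1) :
    Subsingleton (XA (R := R) n) := by
  match n, h0, h1 with
  | .ofNat 0, h0, _ => exact absurd rfl h0
  | .ofNat 1, _, h1 => exact absurd rfl h1
  | .ofNat (k+2), _, _ => exact inferInstanceAs (Subsingleton PUnit)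
  | .negSucc k, _, _ => exact inferInstanceAs (Subsingleton PUnit)

lemma subsingleton_XB {n : ℤ} (h1 : n ≠ 1) (h2 : n ≠ 2) :
    Subsingleton (XB (R := R) n) := by
  match n, h1, h2 with
  | .ofNat 1, h1, _ => exact absurd rfl h1
  | .ofNat 2, _, h2 => exact absurd rfl h2
  | .ofNat 0, _, _ => exact inferInstanceAs (Subsingleton PUnit)
  | .ofNat (k+3), _, _ => exact inferInstanceAs (Subsingleton PUnit)
  | .negSucc k, _, _ => exact inferInstanceAs (Subsingleton PUnit)

lemma finproj_XA (n : ℤ) :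
    Module.Finite Rᵐᵒᵖ (XA (R := R) n) ∧ Module.Projective Rᵐᵒᵖ (XA (R := R) n) := by
  match n with
  | .ofNat 0 => exact ⟨inferInstanceAs (Module.Finite Rᵐᵒᵖ Rᵐᵒᵖ),
      inferInstanceAs (Module.Projective Rᵐᵒᵖ Rᵐᵒᵖ)⟩
  | .ofNat 1 => exact ⟨inferInstanceAs (Module.Finite Rᵐᵒᵖ Rᵐᵒᵖ),
      inferInstanceAs (Module.Projective Rᵐᵒᵖ Rᵐᵒᵖ)⟩
  | .ofNat (k+2) => exact ⟨inferInstanceAs (Module.Finite Rᵐᵒᵖ PUnit.{u+1}),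
      inferInstanceAs (Module.Projective Rᵐᵒᵖ PUnit.{u+1})⟩
  | .negSucc k => exact ⟨inferInstanceAs (Module.Finite Rᵐᵒᵖ PUnit.{u+1}),
      inferInstanceAs (Module.Projective Rᵐᵒᵖ PUnit.{u+1})⟩

lemma finproj_XB (n : ℤ) :
    Module.Finite Rᵐᵒᵖ (XB (R := R) n) ∧ Module.Projective Rᵐᵒᵖ (XB (R := R) n) := by
  match n with
  | .ofNat 1 => exact ⟨inferInstanceAs (Module.Finite Rᵐᵒᵖ Rᵐᵒᵖ),
      inferInstanceAs (Module.Projective Rᵐᵒᵖ Rᵐᵒᵖ)⟩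
  | .ofNat 2 => exact ⟨inferInstanceAs (Module.Finite Rᵐᵒᵖ Rᵐᵒᵖ),
      inferInstanceAs (Module.Projective Rᵐᵒᵖ Rᵐᵒᵖ)⟩
  | .ofNat 0 => exact ⟨inferInstanceAs (Module.Finite Rᵐᵒᵖ PUnit.{u+1}),
      inferInstanceAs (Module.Projective Rᵐᵒᵖ PUnit.{u+1})⟩
  | .ofNat (k+3) => exact ⟨inferInstanceAs (Module.Finite Rᵐᵒᵖ PUnit.{u+1}),
      inferInstanceAs (Module.Projective Rᵐᵒᵖ PUnit.{u+1})⟩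
  | .negSucc k => exact ⟨inferInstanceAs (Module.Finite Rᵐᵒᵖ PUnit.{u+1}),
      inferInstanceAs (Module.Projective Rᵐᵒᵖ PUnit.{u+1})⟩

lemma isZero_XA {n : ℤ} (h0 : n ≠ 0) (h1 : n ≠ 1) : IsZero (XA (R := R) n) := by
  have := subsingleton_XA (R := R) h0 h1
  exact ModuleCat.isZero_of_subsingleton _

lemma isZero_XB {n : ℤ} (h1 : n ≠ 1) (h2 : n ≠ 2) : IsZero (XB (R := R) n) := by
  have := subsingleton_XB (R := R) h1 h2
  exact ModuleCat.isZero_of_subsingleton _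

lemma perfect_KK (x : R) : IsPerfect R (KK x) :=
  ⟨⟨0, 1, fun _ hn => isZero_XA (by omega) (by omega)⟩, fun n => finproj_XA n⟩

lemma perfect_LL (x : R) : IsPerfect R (LL x) :=
  ⟨⟨1, 2, fun _ hn => isZero_XB (by omega) (by omega)⟩, fun n => finproj_XB n⟩

/-! ### Homology vanishing helpers -/

section Homology

variable {P Q : ChainComplex (ModuleCat.{u} Rᵐᵒᵖ) ℤ} (f : P ⟶ Q)

lemma homologyMap_eq_zero_of_src (n : ℤ) (h : IsZero (P.X n)) :
    homologyMap f n = 0 := by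
  have h1 : IsZero (P.cycles n) := IsZero.of_mono (P.iCycles n) h
  have h2 : IsZero (P.homology n) := IsZero.of_epi (P.homologyπ n) h1
  exact h2.eq_of_src _ _

lemma homologyMap_eq_zero_of_tgt (n : ℤ) (h : IsZero (Q.X n)) :
    homologyMap f n = 0 := by
  have h1 : IsZero (Q.cycles n) := IsZero.of_mono (Q.iCycles n) h
  have h2 : IsZero (Q.homology n) := IsZero.of_epi (Q.homologyπ n) h1
  exact h2.eq_of_tgt _ _

lemma homologyMap_eq_zero_of_f_eq_zero (n : ℤ) (h : f.f n = 0) :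
    homologyMap f n = 0 := by
  have hc : cyclesMap f n = 0 := by
    rw [← cancel_mono (Q.iCycles n), cyclesMap_i, h, comp_zero, zero_comp]
  rw [← cancel_epi (P.homologyπ n), homologyπ_naturality, hc, zero_comp, comp_zero]

lemma homologyMap_eq_zero_of_boundary (n : ℤ)
    (H : ∀ c : P.X n, P.d n (n - 1) c = 0 → ∃ u : Q.X (n + 1), Q.d (n + 1) n u = f.f n c) :
    homologyMap f n = 0 := by
  rw [← cancel_epi (P.homologyπ n), homologyπ_naturality, comp_zero]
  apply ModuleCat.hom_ext
  apply LinearMap.ext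
  intro z
  have hz : P.d n (n - 1) (P.iCycles n z) = 0 :=
    ConcreteCategory.congr_hom (P.iCycles_d n (n - 1)) z
  obtain ⟨u, hu⟩ := H (P.iCycles n z) hz
  have hinj : Function.Injective (Q.iCycles n) :=
    (ModuleCat.mono_iff_injective (Q.iCycles n)).1 inferInstance
  have hcyc : cyclesMap f n z = Q.toCycles (n + 1) n u := by
    apply hinj
    have e1 : Q.iCycles n (cyclesMap f n z) = f.f n (P.iCycles n z) :=
      ConcreteCategory.congr_hom (cyclesMap_i f n) z
    have e2 : Q.iCycles n (Q.toCycles (n + 1) n u) = Q.d (n + 1) n u :=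
      ConcreteCategory.congr_hom (Q.toCycles_i (n + 1) n) u
    rw [e1, e2, hu]
  show Q.homologyπ n (cyclesMap f n z) = 0
  rw [hcyc]
  exact ConcreteCategory.congr_hom (Q.toCycles_comp_homologyπ (n + 1) n) u

end Homology

/-! ### Case (a): the shifted ghost `KK x ⟶ LL x` -/

def fIa : ∀ i : ℤ, XA (R := R) i ⟶ XB (R := R) i
  | .ofNat 1 => 𝟙 (Mo R)
  | .ofNat 0 => 0
  | .ofNat (_+2) => 0
  | .negSucc _ => 0

lemma fIa_ne {n : ℤ} (h : n ≠ 1) : fIa (R := R) n = 0 := by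
  match n, h with
  | .ofNat 0, _ => rfl
  | .ofNat (k+2), _ => rfl
  | .negSucc k, _ => rfl

/-- The ghost map `KK x ⟶ LL x` which is the identity in degree 1. -/
def gA (x : R) : KK x ⟶ LL x :=
  ChainComplex.ofHom (X := KK x) (Y := LL x) fIa (by
    intro i
    rw [show (LL x).d (i + 1) i = dB x i from ChainComplex.of_d _ _ i,
      show (KK x).d (i + 1) i = dA x i from ChainComplex.of_d _ _ i]
    show fIa (R := R) (i + 1) ≫ dB x i = dA x i ≫ fIa i
    rcases eq_or_ne i 0 with rfl | h0
    · rw [show dB x 0 = 0 from rfl, show fIa (R := R) 0 = 0 from rfl, comp_zero, comp_zero]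
    · rcases eq_or_ne i 1 with rfl | h1
      · rw [show fIa (R := R) (1+1) = 0 from rfl, zero_comp,
          show dA x 1 = 0 from rfl, zero_comp]
      · simp [dA_ne x h0, fIa_ne (show i + 1 ≠ 1 by omega)])

lemma gA_f_one (x : R) : (gA x).f 1 = 𝟙 (Mo R) := rfl

lemma ghost_gA (x : R) (hsub : ∀ r : R, x * r = 0 → ∃ u : R, r = x * u) :
    ∀ n : ℤ, homologyMap (gA x) n = 0 := by
  intro n
  rcases eq_or_ne n 1 with rfl | h1
  · apply homologyMap_eq_zero_of_boundary
    intro c hc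
    have hc2 : mrL x (c : Rᵐᵒᵖ) = 0 := hc
    have hx0 : x * (unop c) = 0 := by
      have := congrArg unop (show (show Rᵐᵒᵖ from c) * op x = 0 from hc2)
      rw [unop_mul, unop_op, MulOpposite.unop_zero] at this
      exact this
    obtain ⟨u, hu⟩ := hsub (unop c) hx0
    refine ⟨op u, ?_⟩
    show (LL x).d 2 1 (op u) = (gA x).f 1 c
    rw [LL_d x, gA_f_one]
    show op u * op x = c
    rw [← op_mul, ← hu]; exact op_unop _
  · rcases eq_or_ne n 0 with rfl | h0
    · exact homologyMap_eq_zero_of_tgt _ 0 (isZero_XB (n := 0) (by norm_num) (by norm_num))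
    · exact homologyMap_eq_zero_of_src _ n (isZero_XA h0 h1)

/-! ### Case (b): the ghost `KK y ⟶ KK x` -/

def fIb (x : R) : ∀ i : ℤ, XA (R := R) i ⟶ XA (R := R) i
  | .ofNat 0 => mr x
  | .ofNat (_+1) => 0
  | .negSucc _ => 0

lemma fIb_ne (x : R) {n : ℤ} (h : n ≠ 0) : fIb x n = 0 := by
  match n, h with
  | .ofNat (k+1), _ => rfl
  | .negSucc k, _ => rfl

/-- The ghost map `KK y ⟶ KK x` which is left multiplication by `x` in degree 0. -/
def fB (x y : R) (hxy : x * y = 0) : KK y ⟶ KK x :=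
  ChainComplex.ofHom (X := KK y) (Y := KK x) (fIb x) (by
    intro i
    rw [show (KK x).d (i + 1) i = dA x i from ChainComplex.of_d _ _ i,
      show (KK y).d (i + 1) i = dA y i from ChainComplex.of_d _ _ i]
    show fIb x (i + 1) ≫ dA x i = dA y i ≫ fIb x i
    rcases eq_or_ne i 0 with rfl | h0
    · rw [show fIb x (0+1) = 0 from rfl, zero_comp]
      show (0 : Mo R ⟶ Mo R) = mr y ≫ mr x
      rw [mr_comp, hxy, mr_zero]
    · simp [dA_ne y h0, dA_ne x h0])

lemma fB_f_zero (x y : R) (hxy : x * y = 0) : (fB x y hxy).f 0 = mr x := rfl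

lemma fB_f_one (x y : R) (hxy : x * y = 0) : (fB x y hxy).f 1 = 0 := rfl

lemma ghost_fB (x y : R) (hxy : x * y = 0) :
    ∀ n : ℤ, homologyMap (fB x y hxy) n = 0 := by
  intro n
  rcases eq_or_ne n 0 with rfl | h0
  · apply homologyMap_eq_zero_of_boundary
    intro c _
    refine ⟨c, ?_⟩
    show (KK x).d 1 0 c = (fB x y hxy).f 0 c
    rw [KK_d x, fB_f_zero]
    rfl
  · rcases eq_or_ne n 1 with rfl | h1
    · exact homologyMap_eq_zero_of_f_eq_zero _ 1 (fB_f_one x y hxy)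
    · exact homologyMap_eq_zero_of_src _ n (isZero_XA h0 h1)

end VNRGH

open VNRGH MulOpposite

theorem vonNeumannRegular_of_localRing_of_gh (R : Type u) [Ring R] [IsLocalRing R]
    (hgh : SatisfiesGH R) :
    ∀ x : R, ∃ y : R, x = x * y * x := by
  intro x
  by_cases hx : IsUnit x
  · obtain ⟨w, hw⟩ := hx
    refine ⟨↑w⁻¹, ?_⟩
    rw [← hw, w.mul_inv, one_mul]
  · suffices hx0 : x = 0 by exact ⟨0, by rw [hx0, zero_mul, zero_mul]⟩
    by_cases hsub : ∀ r : R, x * r = 0 → ∃ u : R, r = x * u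
    · -- Case (a): impossible, as it would make x a unit.
      exfalso
      obtain ⟨h⟩ := hgh (KK x) (LL x) (perfect_KK x) (perfect_LL x) (gA x) (ghost_gA x hsub)
      have hc := h.comm 1
      rw [dNext_eq h.hom (show (ComplexShape.down ℤ).Rel 1 0 by simp),
        prevD_eq h.hom (show (ComplexShape.down ℤ).Rel 2 1 by simp),
        KK_d x, LL_d x, gA_f_one,
        show (0 : KK x ⟶ LL x).f 1 = 0 from rfl, add_zero] at hc
      set φ : Rᵐᵒᵖ →ₗ[Rᵐᵒᵖ] Rᵐᵒᵖ := (h.hom 0 1).hom with hφ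
      set χ : Rᵐᵒᵖ →ₗ[Rᵐᵒᵖ] Rᵐᵒᵖ := (h.hom 1 2).hom with hχ
      have hc' : (LinearMap.id : Rᵐᵒᵖ →ₗ[Rᵐᵒᵖ] Rᵐᵒᵖ) =
          φ.comp (mrL x) + (mrL x).comp χ := congrArg ModuleCat.Hom.hom hc
      have e0 := DFunLike.congr_fun hc' (1 : Rᵐᵒᵖ)
      simp only [LinearMap.id_apply, LinearMap.add_apply, LinearMap.comp_apply,
        mrL_apply, one_mul] at e0
      -- e0 : 1 = φ (op x) + χ 1 * op x
      have hφ' : φ (op x) = op x * φ 1 := by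
        have hsm := φ.map_smul (op x) (1 : Rᵐᵒᵖ)
        simpa [smul_eq_mul, mul_one] using hsm
      rw [hφ'] at e0
      have e1 : unop (φ 1) * x + x * unop (χ 1) = 1 := by
        have := congrArg unop e0
        simpa using this.symm
      rcases IsLocalRing.isUnit_or_isUnit_of_add_one e1 with h1 | h2
      · exact hx (isUnit_right_of_mul h1)
      · exact hx (isUnit_left_of_mul h2)
    · -- Case (b): x = 0.
      push_neg at hsub
      obtain ⟨y, hxy, hy⟩ := hsub
      have hy0 : y ≠ 0 := fun h0 => hy 0 (by rw [h0, mul_zero])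
      obtain ⟨h⟩ := hgh (KK y) (KK x) (perfect_KK y) (perfect_KK x) (fB x y hxy)
        (ghost_fB x y hxy)
      have hc0 := h.comm 0
      rw [dNext_eq h.hom (show (ComplexShape.down ℤ).Rel 0 (-1) by simp),
        prevD_eq h.hom (show (ComplexShape.down ℤ).Rel 1 0 by simp),
        KK_d_ne y (by omega), zero_comp, KK_d x, fB_f_zero,
        show (0 : KK y ⟶ KK x).f 0 = 0 from rfl, add_zero, zero_add] at hc0
      have hc1 := h.comm 1
      rw [dNext_eq h.hom (show (ComplexShape.down ℤ).Rel 1 0 by simp),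
        prevD_eq h.hom (show (ComplexShape.down ℤ).Rel 2 1 by simp),
        KK_d_ne x (by omega), comp_zero, KK_d y, fB_f_one,
        show (0 : KK y ⟶ KK x).f 1 = 0 from rfl, add_zero, add_zero] at hc1
      set φ : Rᵐᵒᵖ →ₗ[Rᵐᵒᵖ] Rᵐᵒᵖ := (h.hom 0 1).hom with hφ
      set s : R := unop (φ 1) with hs
      have hc0' : mrL x = (mrL x).comp φ := congrArg ModuleCat.Hom.hom hc0
      have exs : x = x * s := by
        have e0 := DFunLike.congr_fun hc0' (1 : Rᵐᵒᵖ)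
        simp only [LinearMap.comp_apply, mrL_apply, one_mul] at e0
        -- e0 : op x = φ 1 * op x
        have := congrArg unop e0
        simpa [hs] using this
      have hc1' : (0 : Rᵐᵒᵖ →ₗ[Rᵐᵒᵖ] Rᵐᵒᵖ) = φ.comp (mrL y) := congrArg ModuleCat.Hom.hom hc1
      have esy : s * y = 0 := by
        have e1 := DFunLike.congr_fun hc1' (1 : Rᵐᵒᵖ)
        simp only [LinearMap.comp_apply, mrL_apply, one_mul, LinearMap.zero_apply] at e1
        -- e1 : 0 = φ (op y)
        have hsm := φ.map_smul (op y) (1 : Rᵐᵒᵖ)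
        simp only [smul_eq_mul, mul_one] at hsm
        rw [hsm] at e1
        have := congrArg unop e1
        simpa [hs] using this.symm
      have hsu : ¬IsUnit s := by
        intro hsu
        obtain ⟨w, hw⟩ := hsu
        apply hy0
        have h' : (↑w⁻¹ : R) * (s * y) = 0 := by rw [esy, mul_zero]
        rwa [← hw, ← mul_assoc, w.inv_mul, one_mul] at h'
      have hadd : s + (1 - s) = 1 := by abel
      have h1s : IsUnit (1 - s) := by
        rcases IsLocalRing.isUnit_or_isUnit_of_add_one hadd with h1 | h2
        · exact absurd h1 hsu
        · exact h2
      obtain ⟨w, hw⟩ := h1s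
      have hx1s : x * (1 - s) = 0 := by rw [mul_sub, mul_one, ← exs, sub_self]
      have h' : x * ((1 - s) * (↑w⁻¹ : R)) = 0 := by rw [← mul_assoc, hx1s, zero_mul]
      rwa [← hw, w.mul_inv, mul_one] at h'
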